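/- Define φ̃(θ,φ,r; k_y,k_z) = k_z sinθ + k_y sinφ cosθ − (k_y² + k_z²)/(2r). Suppose angles θ_{k_i}, φ_{k_i} and ranges r_{k_i} > 0 (i = 0,…,2p) are such that s₁ := ∑_i (−1)^i sinθ_{k_i} ∈ [−1,1], and setting θ* = arcsin(s₁), s₂ := (1/cosθ*) ∑_i (−1)^i sinφ_{k_i} cosθ_{k_i} ∈ [−1,1], φ* = arcsin(s₂), and ρ := ∑_i (−1)^i / r_{k_i} > 0 with r* = 1/ρ. Then for all k_y, k_z: ∑_{i=0}^{2p} (−1)^i φ̃(θ_{k_i}, φ_{k_i}, r_{k_i}; k_y, k_z) = φ̃(θ*, φ*, r*; k_y, k_z). -/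

import Mathlib

open Real

/-- Fresnel phase of a point `(θ, φ, r)` observed at array element coordinates `(k_y, k_z)`. -/
noncomputable def fresnelPhase (θ φ r ky kz : ℝ) : ℝ :=
  kz * Real.sin θ + ky * Real.sin φ * Real.cos θ - (ky ^ 2 + kz ^ 2) / (2 * r)

/-- Theorem 1 (core identity): the alternating sum of the Fresnel phases of `2p+1` user
locations equals the Fresnel phase of a single effective focal point `(θ*, φ*, r*)` whose
elevation, azimuth and range are given by the arcsin/harmonic formulas. -/
theorem distortion_focal_point (p : ℕ) (θ φ r : Fin (2 * p + 1) → ℝ)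
    (hr : ∀ i, 0 < r i)
    (hs1 : |∑ i : Fin (2 * p + 1), (-1 : ℝ) ^ (i : ℕ) * Real.sin (θ i)| ≤ 1)
    (θs : ℝ) (hθs : θs = Real.arcsin (∑ i : Fin (2 * p + 1), (-1 : ℝ) ^ (i : ℕ) * Real.sin (θ i)))
    (hs2 : |(∑ i : Fin (2 * p + 1), (-1 : ℝ) ^ (i : ℕ) * Real.sin (φ i) * Real.cos (θ i)) / Real.cos θs| ≤ 1)
    (hcos : Real.cos θs ≠ 0)
    (φs : ℝ)
    (hφs : φs = Real.arcsin
      ((∑ i : Fin (2 * p + 1), (-1 : ℝ) ^ (i : ℕ) * Real.sin (φ i) * Real.cos (θ i)) / Real.cos θs))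
    (hρ : 0 < ∑ i : Fin (2 * p + 1), (-1 : ℝ) ^ (i : ℕ) / r i)
    (rs : ℝ) (hrs : rs = (∑ i : Fin (2 * p + 1), (-1 : ℝ) ^ (i : ℕ) / r i)⁻¹) :
    ∀ ky kz : ℝ,
      ∑ i : Fin (2 * p + 1), (-1 : ℝ) ^ (i : ℕ) * fresnelPhase (θ i) (φ i) (r i) ky kz =
        fresnelPhase θs φs rs ky kz := by
  intro ky kz
  rw [abs_le] at hs1 hs2
  have h1 : Real.sin θs = ∑ i : Fin (2 * p + 1), (-1 : ℝ) ^ (i : ℕ) * Real.sin (θ i) := by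
    rw [hθs, Real.sin_arcsin hs1.1 hs1.2]
  have h2 : Real.sin φs * Real.cos θs
      = ∑ i : Fin (2 * p + 1), (-1 : ℝ) ^ (i : ℕ) * Real.sin (φ i) * Real.cos (θ i) := by
    rw [hφs, Real.sin_arcsin hs2.1 hs2.2, div_mul_cancel₀ _ hcos]
  have h3 : rs⁻¹ = ∑ i : Fin (2 * p + 1), (-1 : ℝ) ^ (i : ℕ) / r i := by
    rw [hrs, inv_inv]
  simp only [fresnelPhase, h1]
  rw [show ky * Real.sin φs * Real.cos θs = ky * (Real.sin φs * Real.cos θs) by ring, h2,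
    div_eq_mul_inv _ (2 * rs), mul_inv, h3]
  rw [Finset.mul_sum, Finset.mul_sum, Finset.mul_sum, Finset.mul_sum]
  rw [← Finset.sum_add_distrib, ← Finset.sum_sub_distrib]
  apply Finset.sum_congr rfl
  intro i _
  have : r i ≠ 0 := (hr i).ne'
  field_simp
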